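/- Let U be a set of games closed under followers, disjunctive sum, and conjugation, and let S ⊆ U be closed under followers. If for every G ∈ S and every Left end X ∈ U the misère outcome of G + Ḡ + X lies in L ∪ N (Left wins moving first), then G + Ḡ ≡ 0 (mod U) for every G ∈ S, i.e., o⁻(G + Ḡ + Y) = o⁻(Y) for all Y ∈ U. -/

import Mathlib

universe u

namespace SetTheory

/-- Pre-games, as formerly defined in Mathlib (`SetTheory.PGame`), now removed from Mathlib. -/
inductive PGame : Type (u + 1)
  | mk : ∀ α β : Type u, (α → PGame) → (β → PGame) → PGame

namespace PGame

def LeftMoves : PGame → Type u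
  | mk l _ _ _ => l

def RightMoves : PGame → Type u
  | mk _ r _ _ => r

def moveLeft : ∀ g : PGame, LeftMoves g → PGame
  | mk _l _ L _ => L

def moveRight : ∀ g : PGame, RightMoves g → PGame
  | mk _ _r _ R => R

inductive IsOption : PGame → PGame → Prop
  | moveLeft {x : PGame} (i : x.LeftMoves) : IsOption (x.moveLeft i) x
  | moveRight {x : PGame} (i : x.RightMoves) : IsOption (x.moveRight i) x

def Subsequent : PGame → PGame → Prop :=
  Relation.TransGen IsOption

def neg : PGame → PGame
  | ⟨l, r, L, R⟩ => ⟨r, l, fun i => neg (R i), fun i => neg (L i)⟩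

instance : Neg PGame :=
  ⟨neg⟩

noncomputable instance : Add PGame.{u} :=
  ⟨fun x y => by
    induction x generalizing y with | mk xl xr _ _ IHxl IHxr => ?_
    induction y with | mk yl yr yL yR IHyl IHyr => ?_
    have y := mk yl yr yL yR
    refine ⟨xl ⊕ yl, xr ⊕ yr, Sum.rec ?_ ?_, Sum.rec ?_ ?_⟩
    · exact fun i => IHxl i y
    · exact IHyl
    · exact fun i => IHxr i y
    · exact IHyr⟩

end PGame

end SetTheory

open SetTheory

namespace Misere

/-- Misère winning: `(wins G).1` means Left, moving first on `G`, wins under misère play;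
`(wins G).2` means Right, moving first, wins. The player unable to move wins. -/
def wins : PGame → Prop × Prop
  | ⟨α, β, L, R⟩ =>
    (IsEmpty α ∨ ∃ i, ¬ (wins (L i)).2,
     IsEmpty β ∨ ∃ j, ¬ (wins (R j)).1)

/-- Left wins moving first under misère play. -/
def LeftFirst (G : PGame) : Prop := (wins G).1

/-- Right wins moving first under misère play. -/
def RightFirst (G : PGame) : Prop := (wins G).2

/-- Normal-play winning: `(nwins G).1` means Left moving first wins (player unable to move loses). -/
def nwins : PGame → Prop × Prop
  | ⟨α, β, L, R⟩ =>
    (∃ i, ¬ (nwins (L i)).2,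
     ∃ j, ¬ (nwins (R j)).1)

/-- Outcome classes. -/
inductive Outcome : Type
  | L | R | N | P
  deriving DecidableEq

/-- The partial order on outcomes: L > P > R, L > N > R, with P and N incomparable. -/
instance : LE Outcome := ⟨fun a b => a = b ∨ a = .R ∨ b = .L⟩

open Classical in
/-- The misère outcome of a game. -/
noncomputable def misereOutcome (G : PGame) : Outcome :=
  if (wins G).1 then (if (wins G).2 then .N else .L)
  else (if (wins G).2 then .R else .P)

open Classical in
/-- The normal-play outcome of a game. -/
noncomputable def normalOutcome (G : PGame) : Outcome :=
  if (nwins G).1 then (if (nwins G).2 then .N else .L)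
  else (if (nwins G).2 then .R else .P)

/-- A game is dicot if every subposition has a Left option iff it has a Right option. -/
def Dicot : PGame → Prop
  | ⟨α, β, L, R⟩ => (IsEmpty α ↔ IsEmpty β) ∧ (∀ i, Dicot (L i)) ∧ (∀ j, Dicot (R j))

/-- A dead Left end: a Left end all of whose followers are Left ends. -/
def DeadLeftEnd : PGame → Prop
  | ⟨α, _β, _L, R⟩ => IsEmpty α ∧ ∀ j, DeadLeftEnd (R j)

/-- A dead Right end: a Right end all of whose followers are Right ends. -/
def DeadRightEnd : PGame → Prop
  | ⟨_α, β, L, _R⟩ => IsEmpty β ∧ ∀ i, DeadRightEnd (L i)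

/-- A follower of `G` is any position reachable from `G`, including `G` itself. -/
def Follower (H G : PGame) : Prop := H = G ∨ PGame.Subsequent H G

/-- An end: a position where some player has no move. -/
def IsEnd (G : PGame) : Prop := IsEmpty G.LeftMoves ∨ IsEmpty G.RightMoves

/-- A game is dead-ending if every one of its end followers is a dead end. -/
def DeadEnding (G : PGame) : Prop :=
  ∀ H, Follower H G → IsEnd H → (DeadLeftEnd H ∨ DeadRightEnd H)

end Misere


namespace SetTheory.PGame

theorem moveRecOn {C : PGame → Prop} (x : PGame)
    (IH : ∀ y : PGame, (∀ i, C (y.moveLeft i)) → (∀ j, C (y.moveRight j)) → C y) : C x := by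
  induction x with
  | mk xl xr xL xR ihL ihR => exact IH (mk xl xr xL xR) ihL ihR

theorem Subsequent.moveLeft {x : PGame} (i : x.LeftMoves) : Subsequent (x.moveLeft i) x :=
  Relation.TransGen.single (IsOption.moveLeft i)

theorem Subsequent.moveRight {x : PGame} (j : x.RightMoves) : Subsequent (x.moveRight j) x :=
  Relation.TransGen.single (IsOption.moveRight j)

theorem neg_neg_aux (x : PGame) : -(-x) = x := by
  induction x with
  | mk xl xr xL xR ihL ihR =>
    show neg (neg (mk xl xr xL xR)) = _
    simp only [neg]
    exact congrArg₂ (mk xl xr) (funext ihL) (funext ihR)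

instance : InvolutiveNeg PGame :=
  { (inferInstance : Neg PGame) with neg_neg := neg_neg_aux }

theorem leftMoves_neg (x : PGame) : (-x).LeftMoves = x.RightMoves := by cases x; rfl

theorem rightMoves_neg (x : PGame) : (-x).RightMoves = x.LeftMoves := by cases x; rfl

def toLeftMovesNeg {x : PGame} : x.RightMoves ≃ (-x).LeftMoves :=
  Equiv.cast (leftMoves_neg x).symm

def toRightMovesNeg {x : PGame} : x.LeftMoves ≃ (-x).RightMoves :=
  Equiv.cast (rightMoves_neg x).symm

theorem moveLeft_neg {x : PGame} (i) : (-x).moveLeft (toLeftMovesNeg i) = -x.moveRight i := by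
  cases x; rfl

theorem moveLeft_neg' {x : PGame} (i) : (-x).moveLeft i = -x.moveRight (toLeftMovesNeg.symm i) := by
  cases x; rfl

theorem moveRight_neg {x : PGame} (i) : (-x).moveRight (toRightMovesNeg i) = -x.moveLeft i := by
  cases x; rfl

theorem moveRight_neg' {x : PGame} (i) :
    (-x).moveRight i = -x.moveLeft (toRightMovesNeg.symm i) := by
  cases x; rfl

theorem leftMoves_add (x y : PGame) : (x + y).LeftMoves = (x.LeftMoves ⊕ y.LeftMoves) := by
  cases x; cases y; rfl

theorem rightMoves_add (x y : PGame) : (x + y).RightMoves = (x.RightMoves ⊕ y.RightMoves) := by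
  cases x; cases y; rfl

def toLeftMovesAdd {x y : PGame} : x.LeftMoves ⊕ y.LeftMoves ≃ (x + y).LeftMoves :=
  Equiv.cast (leftMoves_add x y).symm

def toRightMovesAdd {x y : PGame} : x.RightMoves ⊕ y.RightMoves ≃ (x + y).RightMoves :=
  Equiv.cast (rightMoves_add x y).symm

theorem add_moveLeft_inl {x : PGame} (y : PGame) (i) :
    (x + y).moveLeft (toLeftMovesAdd (Sum.inl i)) = x.moveLeft i + y := by
  cases x; cases y; rfl

theorem add_moveRight_inl {x : PGame} (y : PGame) (i) :
    (x + y).moveRight (toRightMovesAdd (Sum.inl i)) = x.moveRight i + y := by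
  cases x; cases y; rfl

theorem add_moveLeft_inr (x : PGame) {y : PGame} (i) :
    (x + y).moveLeft (toLeftMovesAdd (Sum.inr i)) = x + y.moveLeft i := by
  cases x; cases y; rfl

theorem add_moveRight_inr (x : PGame) {y : PGame} (i) :
    (x + y).moveRight (toRightMovesAdd (Sum.inr i)) = x + y.moveRight i := by
  cases x; cases y; rfl

theorem leftMoves_add_cases {x y : PGame} (k) {P : (x + y).LeftMoves → Prop}
    (hl : ∀ i, P (toLeftMovesAdd (Sum.inl i))) (hr : ∀ i, P (toLeftMovesAdd (Sum.inr i))) :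
    P k := by
  rw [← toLeftMovesAdd.apply_symm_apply k]
  rcases toLeftMovesAdd.symm k with i | i
  · exact hl i
  · exact hr i

theorem rightMoves_add_cases {x y : PGame} (k) {P : (x + y).RightMoves → Prop}
    (hl : ∀ i, P (toRightMovesAdd (Sum.inl i))) (hr : ∀ i, P (toRightMovesAdd (Sum.inr i))) :
    P k := by
  rw [← toRightMovesAdd.apply_symm_apply k]
  rcases toRightMovesAdd.symm k with i | i
  · exact hl i
  · exact hr i

inductive Relabelling : PGame.{u} → PGame.{u} → Prop
  | mk : ∀ {x y : PGame} (L : x.LeftMoves ≃ y.LeftMoves) (R : x.RightMoves ≃ y.RightMoves),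
      (∀ i, Relabelling (x.moveLeft i) (y.moveLeft (L i))) →
        (∀ j, Relabelling (x.moveRight j) (y.moveRight (R j))) → Relabelling x y

infixl:50 " ≡r " => Relabelling

theorem Relabelling.refl (x : PGame) : x ≡r x := by
  induction x with
  | mk xl xr xL xR ihL ihR => exact ⟨Equiv.refl _, Equiv.refl _, ihL, ihR⟩

theorem Relabelling.trans {x y z : PGame} (h₁ : x ≡r y) (h₂ : y ≡r z) : x ≡r z := by
  induction h₁ generalizing z with
  | mk L₁ R₁ hL₁ hR₁ ihL ihR =>
    obtain ⟨L₂, R₂, hL₂, hR₂⟩ := h₂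
    exact ⟨L₁.trans L₂, R₁.trans R₂, fun i => ihL i (hL₂ _), fun j => ihR j (hR₂ _)⟩

theorem Relabelling.addCongr {w x y z : PGame} (h₁ : w ≡r x) (h₂ : y ≡r z) :
    w + y ≡r x + z := by
  induction h₁ generalizing y z with
  | mk L₁ R₁ hL₁ hR₁ ihL₁ ihR₁ =>
  have Hwx := Relabelling.mk L₁ R₁ hL₁ hR₁
  induction h₂ with
  | mk L₂ R₂ hL₂ hR₂ ihL₂ ihR₂ =>
  have Hyz := Relabelling.mk L₂ R₂ hL₂ hR₂
  refine ⟨toLeftMovesAdd.symm.trans ((Equiv.sumCongr L₁ L₂).trans toLeftMovesAdd),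
    toRightMovesAdd.symm.trans ((Equiv.sumCongr R₁ R₂).trans toRightMovesAdd), ?_, ?_⟩
  · intro k
    rw [← toLeftMovesAdd.apply_symm_apply k]
    rcases toLeftMovesAdd.symm k with i | j
    · simp only [Equiv.trans_apply, Equiv.symm_apply_apply, Equiv.sumCongr_apply, Sum.map_inl,
        add_moveLeft_inl]
      exact ihL₁ i Hyz
    · simp only [Equiv.trans_apply, Equiv.symm_apply_apply, Equiv.sumCongr_apply, Sum.map_inr,
        add_moveLeft_inr]
      exact ihL₂ j
  · intro k
    rw [← toRightMovesAdd.apply_symm_apply k]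
    rcases toRightMovesAdd.symm k with i | j
    · simp only [Equiv.trans_apply, Equiv.symm_apply_apply, Equiv.sumCongr_apply, Sum.map_inl,
        add_moveRight_inl]
      exact ihR₁ i Hyz
    · simp only [Equiv.trans_apply, Equiv.symm_apply_apply, Equiv.sumCongr_apply, Sum.map_inr,
        add_moveRight_inr]
      exact ihR₂ j

theorem addCommRelabelling (x y : PGame) : x + y ≡r y + x := by
  induction x generalizing y with
  | mk xl xr xL xR ihxl ihxr =>
  induction y with
  | mk yl yr yL yR ihyl ihyr =>
  refine ⟨Equiv.sumComm _ _, Equiv.sumComm _ _, ?_, ?_⟩ <;> rintro (i | j)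
  · exact ihxl i _
  · exact ihyl j
  · exact ihxr i _
  · exact ihyr j

theorem negAddRelabelling (x y : PGame) : -(x + y) ≡r -x + -y := by
  induction x generalizing y with
  | mk xl xr xL xR ihxl ihxr =>
  induction y with
  | mk yl yr yL yR ihyl ihyr =>
  refine ⟨Equiv.refl _, Equiv.refl _, ?_, ?_⟩ <;> rintro (i | j)
  · exact ihxr i _
  · exact ihyr j
  · exact ihxl i _
  · exact ihyl j

end SetTheory.PGame


namespace Misere
open SetTheory PGame

theorem wins_fst (G : PGame) :
    (wins G).1 ↔ (IsEmpty G.LeftMoves ∨ ∃ i, ¬ (wins (G.moveLeft i)).2) := by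
  cases G; rw [wins]; rfl

theorem wins_snd (G : PGame) :
    (wins G).2 ↔ (IsEmpty G.RightMoves ∨ ∃ j, ¬ (wins (G.moveRight j)).1) := by
  cases G; rw [wins]; rfl

theorem wins_relabelling (x : PGame) : ∀ y, x ≡r y →
    (((wins x).1 ↔ (wins y).1) ∧ ((wins x).2 ↔ (wins y).2)) := by
  induction x using PGame.moveRecOn with
  | IH x ihL ihR =>
    intro y e
    obtain ⟨L, R, hL, hR⟩ := e
    constructor
    · rw [wins_fst x, wins_fst y]
      refine or_congr L.isEmpty_congr ⟨?_, ?_⟩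
      · rintro ⟨i, hi⟩
        exact ⟨L i, fun hw => hi ((ihL i _ (hL i)).2.mpr hw)⟩
      · rintro ⟨i, hi⟩
        refine ⟨L.symm i, fun hw => hi ?_⟩
        have e' : x.moveLeft (L.symm i) ≡r y.moveLeft i := by
          have := hL (L.symm i); rwa [L.apply_symm_apply] at this
        exact (ihL _ _ e').2.mp hw
    · rw [wins_snd x, wins_snd y]
      refine or_congr R.isEmpty_congr ⟨?_, ?_⟩
      · rintro ⟨j, hj⟩
        exact ⟨R j, fun hw => hj ((ihR j _ (hR j)).1.mpr hw)⟩
      · rintro ⟨j, hj⟩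
        refine ⟨R.symm j, fun hw => hj ?_⟩
        have e' : x.moveRight (R.symm j) ≡r y.moveRight j := by
          have := hR (R.symm j); rwa [R.apply_symm_apply] at this
        exact (ihR _ _ e').1.mp hw

theorem wins_neg (x : PGame) :
    ((wins (-x)).1 ↔ (wins x).2) ∧ ((wins (-x)).2 ↔ (wins x).1) := by
  induction x using PGame.moveRecOn with
  | IH x ihL ihR =>
    constructor
    · rw [wins_fst (-x), wins_snd x]
      refine or_congr (Equiv.isEmpty_congr toLeftMovesNeg.symm) ⟨?_, ?_⟩
      · rintro ⟨i, hi⟩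
        refine ⟨toLeftMovesNeg.symm i, fun hw => hi ?_⟩
        rw [moveLeft_neg']
        exact (ihR _).2.mpr hw
      · rintro ⟨j, hj⟩
        refine ⟨toLeftMovesNeg j, fun hw => hj ?_⟩
        rw [moveLeft_neg'] at hw
        simpa using (ihR _).2.mp hw
    · rw [wins_snd (-x), wins_fst x]
      refine or_congr (Equiv.isEmpty_congr toRightMovesNeg.symm) ⟨?_, ?_⟩
      · rintro ⟨j, hj⟩
        refine ⟨toRightMovesNeg.symm j, fun hw => hj ?_⟩
        rw [moveRight_neg']
        exact (ihL _).1.mpr hw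
      · rintro ⟨i, hi⟩
        refine ⟨toRightMovesNeg i, fun hw => hi ?_⟩
        rw [moveRight_neg'] at hw
        simpa using (ihL _).1.mp hw

theorem winsL_of_outcome {G : PGame}
    (h : misereOutcome G = Outcome.L ∨ misereOutcome G = Outcome.N) : (wins G).1 := by
  by_contra hw
  unfold misereOutcome at h
  rw [if_neg hw] at h
  rcases h with h | h <;> split_ifs at h <;> exact Outcome.noConfusion h

theorem outcome_congr {G H : PGame} (h1 : (wins G).1 ↔ (wins H).1)
    (h2 : (wins G).2 ↔ (wins H).2) : misereOutcome G = misereOutcome H := by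
  unfold misereOutcome
  by_cases a : (wins H).1 <;> by_cases b : (wins H).2 <;>
    simp [a, b, h1.mpr, h1.mp, h2.mpr, h2.mp, h1, h2]

theorem key (U S : Set PGame)
    (hUf : ∀ G ∈ U, ∀ H, Follower H G → H ∈ U)
    (hUc : ∀ G ∈ U, -G ∈ U)
    (hSf : ∀ G ∈ S, ∀ H, Follower H G → H ∈ S)
    (h : ∀ G ∈ S, ∀ X ∈ U, IsEmpty X.LeftMoves →
      (misereOutcome (G + -G + X) = Outcome.L ∨ misereOutcome (G + -G + X) = Outcome.N)) :
    ∀ G, G ∈ S → ∀ Y, Y ∈ U →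
      (((wins (G + -G + Y)).1 ↔ (wins Y).1) ∧ ((wins (G + -G + Y)).2 ↔ (wins Y).2)) := by
  intro G
  induction G using PGame.moveRecOn with
  | IH G ihGL ihGR =>
  intro hGS Y
  induction Y using PGame.moveRecOn with
  | IH Y ihYL ihYR =>
  intro hYU
  have hGmLS : ∀ i, G.moveLeft i ∈ S := fun i => hSf G hGS _ (Or.inr (Subsequent.moveLeft i))
  have hGmRS : ∀ j, G.moveRight j ∈ S := fun j => hSf G hGS _ (Or.inr (Subsequent.moveRight j))
  have hYmLU : ∀ i, Y.moveLeft i ∈ U := fun i => hUf Y hYU _ (Or.inr (Subsequent.moveLeft i))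
  have hYmRU : ∀ j, Y.moveRight j ∈ U := fun j => hUf Y hYU _ (Or.inr (Subsequent.moveRight j))
  have IHL : ∀ i, ((wins (G.moveLeft i + -(G.moveLeft i) + Y)).1 ↔ (wins Y).1) ∧
      ((wins (G.moveLeft i + -(G.moveLeft i) + Y)).2 ↔ (wins Y).2) :=
    fun i => ihGL i (hGmLS i) Y hYU
  have IHR : ∀ j, ((wins (G.moveRight j + -(G.moveRight j) + Y)).1 ↔ (wins Y).1) ∧
      ((wins (G.moveRight j + -(G.moveRight j) + Y)).2 ↔ (wins Y).2) :=
    fun j => ihGR j (hGmRS j) Y hYU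
  have JL : ∀ i, ((wins (G + -G + Y.moveLeft i)).1 ↔ (wins (Y.moveLeft i)).1) ∧
      ((wins (G + -G + Y.moveLeft i)).2 ↔ (wins (Y.moveLeft i)).2) :=
    fun i => ihYL i (hYmLU i)
  have JR : ∀ j, ((wins (G + -G + Y.moveRight j)).1 ↔ (wins (Y.moveRight j)).1) ∧
      ((wins (G + -G + Y.moveRight j)).2 ↔ (wins (Y.moveRight j)).2) :=
    fun j => ihYR j (hYmRU j)
  constructor
  · constructor
    · -- (wins sum).1 → (wins Y).1, by contradiction
      intro hws
      by_contra hnY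
      have hnY2 := hnY
      rw [wins_fst] at hnY2
      push_neg at hnY2
      obtain ⟨hne, hall⟩ := hnY2
      rw [wins_fst] at hws
      rcases hws with hE | ⟨k, hk⟩
      · obtain ⟨i₀⟩ := hne
        exact hE.elim (toLeftMovesAdd (Sum.inr i₀))
      · apply hk
        refine leftMoves_add_cases (P := fun t => (wins ((G + -G + Y).moveLeft t)).2) k ?_ ?_
        · intro k'
          rw [add_moveLeft_inl]
          refine leftMoves_add_cases (P := fun t => (wins ((G + -G).moveLeft t + Y)).2)
            k' ?_ ?_
          · intro iG
            rw [add_moveLeft_inl]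
            rw [wins_snd]; right
            refine ⟨toRightMovesAdd (Sum.inl (toRightMovesAdd
              (Sum.inr (toRightMovesNeg iG)))), ?_⟩
            rw [add_moveRight_inl, add_moveRight_inr, moveRight_neg]
            exact fun hw => hnY ((IHL iG).1.mp hw)
          · intro iN
            rw [add_moveLeft_inr, moveLeft_neg']
            rw [wins_snd]; right
            refine ⟨toRightMovesAdd (Sum.inl (toRightMovesAdd (Sum.inl
              (toLeftMovesNeg.symm iN)))), ?_⟩
            rw [add_moveRight_inl, add_moveRight_inl]
            exact fun hw => hnY ((IHR _).1.mp hw)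
        · intro i
          rw [add_moveLeft_inr]
          exact (JL i).2.mpr (hall i)
    · -- (wins Y).1 → (wins sum).1
      intro hY
      by_cases hYL : IsEmpty Y.LeftMoves
      · exact winsL_of_outcome (h G hGS Y hYU hYL)
      · rw [wins_fst] at hY
        rcases hY with hE | ⟨i, hi⟩
        · exact absurd hE hYL
        · rw [wins_fst]; right
          refine ⟨toLeftMovesAdd (Sum.inr i), ?_⟩
          rw [add_moveLeft_inr]
          exact fun hw => hi ((JL i).2.mp hw)
  · constructor
    · -- (wins sum).2 → (wins Y).2, by contradiction
      intro hws
      by_contra hnY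
      have hnY2 := hnY
      rw [wins_snd] at hnY2
      push_neg at hnY2
      obtain ⟨hne, hall⟩ := hnY2
      rw [wins_snd] at hws
      rcases hws with hE | ⟨k, hk⟩
      · obtain ⟨j₀⟩ := hne
        exact hE.elim (toRightMovesAdd (Sum.inr j₀))
      · apply hk
        refine rightMoves_add_cases (P := fun t => (wins ((G + -G + Y).moveRight t)).1) k ?_ ?_
        · intro k'
          rw [add_moveRight_inl]
          refine rightMoves_add_cases (P := fun t => (wins ((G + -G).moveRight t + Y)).1)
            k' ?_ ?_
          · intro jG
            rw [add_moveRight_inl]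
            rw [wins_fst]; right
            refine ⟨toLeftMovesAdd (Sum.inl (toLeftMovesAdd
              (Sum.inr (toLeftMovesNeg jG)))), ?_⟩
            rw [add_moveLeft_inl, add_moveLeft_inr, moveLeft_neg]
            exact fun hw => hnY ((IHR jG).2.mp hw)
          · intro jN
            rw [add_moveRight_inr, moveRight_neg']
            rw [wins_fst]; right
            refine ⟨toLeftMovesAdd (Sum.inl (toLeftMovesAdd (Sum.inl
              (toRightMovesNeg.symm jN)))), ?_⟩
            rw [add_moveLeft_inl, add_moveLeft_inl]
            exact fun hw => hnY ((IHL _).2.mp hw)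
        · intro j
          rw [add_moveRight_inr]
          exact (JR j).1.mpr (hall j)
    · -- (wins Y).2 → (wins sum).2
      intro hY
      by_cases hYR : IsEmpty Y.RightMoves
      · have hXle : IsEmpty (-Y).LeftMoves := (Equiv.isEmpty_congr toLeftMovesNeg.symm).mpr hYR
        have h1 : (wins (G + -G + -Y)).1 := winsL_of_outcome (h G hGS (-Y) (hUc Y hYU) hXle)
        have h2 : (wins (-(G + -G + -Y))).2 := (wins_neg _).2.mpr h1
        have r : -(G + -G + -Y) ≡r G + -G + Y := by
          have e1 : -(G + -G + -Y) ≡r -(G + -G) + -(-Y) := negAddRelabelling _ _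
          rw [neg_neg] at e1
          have e2 : -(G + -G) ≡r -G + -(-G) := negAddRelabelling _ _
          rw [neg_neg] at e2
          exact e1.trans (Relabelling.addCongr (e2.trans (addCommRelabelling _ _))
            (Relabelling.refl Y))
        exact (wins_relabelling _ _ r).2.mp h2
      · rw [wins_snd] at hY
        rcases hY with hE | ⟨j, hj⟩
        · exact absurd hE hYR
        · rw [wins_snd]; right
          refine ⟨toRightMovesAdd (Sum.inr j), ?_⟩
          rw [add_moveRight_inr]
          exact fun hw => hj ((JR j).1.mp hw)

end Misere

open Misere in
/-- Milley–Renault invertibility criterion. -/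
theorem invertibility_criterion (U S : Set PGame)
    (hUf : ∀ G ∈ U, ∀ H, Follower H G → H ∈ U)
    (hUs : ∀ G ∈ U, ∀ H ∈ U, G + H ∈ U)
    (hUc : ∀ G ∈ U, -G ∈ U)
    (hSU : S ⊆ U)
    (hSf : ∀ G ∈ S, ∀ H, Follower H G → H ∈ S)
    (h : ∀ G ∈ S, ∀ X ∈ U, IsEmpty X.LeftMoves →
      (misereOutcome (G + -G + X) = Outcome.L ∨ misereOutcome (G + -G + X) = Outcome.N)) :
    ∀ G ∈ S, ∀ Y ∈ U, misereOutcome (G + -G + Y) = misereOutcome Y := by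
  intro G hG Y hY
  obtain ⟨h1, h2⟩ := Misere.key U S hUf hUc hSf h G hG Y hY
  exact Misere.outcome_congr h1 h2
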